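/- Let n be a positive integer and let α, β, γ be partitions with at most n rows (weakly decreasing n-tuples of nonnegative integers). The map sending a Littlewood–Richardson skew tableau T of shape γ/α and content β to the array r = (r^i_j), where r^i_j is the number of entries equal to j in row i of T, is a bijection from the set of Littlewood–Richardson skew tableaux of shape γ/α and content β with entries in {1,…,n} onto the set of nonnegative integer solutions of the LR system for (α,β,γ). In particular, the Littlewood–Richardson coefficient c_{α,β}^γ, defined as the number of such tableaux, equals the number of nonnegative integer solutions of the LR system. -/

import Mathlib

/-- A partition with at most `n` rows: a weakly decreasing `n`-tuple of naturals. -/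
def IsPartition (n : ℕ) (α : Fin n → ℕ) : Prop :=
  ∀ i j : Fin n, i ≤ j → α j ≤ α i

/-- The LR system for `(α, β, γ)` in the `n²` rational variables `r i j`
(`r i j` = number of entries equal to `j+1` in row `i+1`, zero-indexed). -/
def IsRatLRSolution (n : ℕ) (α β γ : Fin n → ℕ) (r : Fin n → Fin n → ℚ) : Prop :=
  -- (i) nonnegativity
  (∀ i j : Fin n, 0 ≤ r i j) ∧
  -- (ii) shape constraints
  (∀ i : Fin n, (α i : ℚ) + ∑ j : Fin n, r i j = (γ i : ℚ)) ∧
  -- (iii) content constraints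
  (∀ j : Fin n, ∑ i : Fin n, r i j = (β j : ℚ)) ∧
  -- (iv) tableau constraints
  (∀ (i : Fin n) (h : i.1 + 1 < n) (j : Fin n),
    (α ⟨i.1 + 1, h⟩ : ℚ) + ∑ k ∈ Finset.Iic j, r ⟨i.1 + 1, h⟩ k
      ≤ (α i : ℚ) + ∑ k ∈ Finset.Iio j, r i k) ∧
  -- (v) reverse lattice word constraints
  (∀ i j : Fin n, i < j → r i j = 0) ∧
  (∀ i j : Fin n, 0 < j.1 →
    ∑ i' ∈ Finset.Iic i, r i' j
      ≤ ∑ i' ∈ Finset.Iio i, r i' ⟨j.1 - 1, Nat.lt_of_le_of_lt (Nat.sub_le j.1 1) j.2⟩)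

/-- A nonnegative integer solution of the LR system. -/
def IsNatLRSolution (n : ℕ) (α β γ : Fin n → ℕ) (r : Fin n → Fin n → ℕ) : Prop :=
  IsRatLRSolution n α β γ (fun i j => (r i j : ℚ))

/-- The Littlewood–Richardson coefficient, as the number of nonnegative integer
solutions of the LR system. -/
noncomputable def LRCoeff (n : ℕ) (α β γ : Fin n → ℕ) : ℕ :=
  Set.ncard {r : Fin n → Fin n → ℕ | IsNatLRSolution n α β γ r}

/-- A word `w` (a list of positive naturals) is a reverse lattice word if every
suffix contains, for each `j ≥ 1`, at least as many occurrences of `j` as of `j+1`. -/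
def IsReverseLatticeWord (w : List ℕ) : Prop :=
  ∀ s : List ℕ, s <:+ w → ∀ j : ℕ, 1 ≤ j → s.count (j + 1) ≤ s.count j

/-- A Littlewood–Richardson skew tableau of shape `γ/α` and content `β`, with
entries in `{1, …, n}`.  The cell in row `i+1`, column `c` (for `α i < c ≤ γ i`)
carries the value `entry i c`; entries outside the shape are normalized to `0`. -/
structure LRSkewTableau (n : ℕ) (α β γ : Fin n → ℕ) where
  /-- the shape `γ/α` is defined: `α ⊆ γ` -/
  sub : ∀ i : Fin n, α i ≤ γ i
  /-- `entry i c` is the value in row `i+1`, column `c` -/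
  entry : Fin n → ℕ → ℕ
  /-- entries lie in `{1, …, n}` -/
  entry_pos : ∀ (i : Fin n) (c : ℕ), α i < c → c ≤ γ i → 1 ≤ entry i c
  entry_le : ∀ (i : Fin n) (c : ℕ), α i < c → c ≤ γ i → entry i c ≤ n
  /-- normalization outside the shape -/
  zero_outside : ∀ (i : Fin n) (c : ℕ), c ≤ α i ∨ γ i < c → entry i c = 0
  /-- rows weakly increase left to right -/
  row_weak : ∀ (i : Fin n) (c c' : ℕ), α i < c → c ≤ c' → c' ≤ γ i →
    entry i c ≤ entry i c'
  /-- columns strictly increase downwards -/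
  col_strict : ∀ (i : Fin n) (h : i.1 + 1 < n) (c : ℕ),
    α ⟨i.1 + 1, h⟩ < c → c ≤ γ ⟨i.1 + 1, h⟩ → α i < c → c ≤ γ i →
    entry i c < entry ⟨i.1 + 1, h⟩ c
  /-- content: for each `j ∈ {1, …, n}`, the number of entries equal to `j` is `β j` -/
  content : ∀ j : Fin n,
    (∑ i : Fin n, ((Finset.Ioc (α i) (γ i)).filter (fun c => entry i c = j.1 + 1)).card)
      = β j
  /-- the row word (rows read left to right, bottom row first) is a reverse
  lattice word -/
  lattice : IsReverseLatticeWord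
    (((List.finRange n).reverse).flatMap fun i =>
      (List.range' (α i + 1) (γ i - α i)).map (entry i))

/-- The map sending a LR skew tableau `T` to the array `r`, where `r i j` is the
number of entries equal to `j+1` in row `i+1` of `T`. -/
def tabToR {n : ℕ} {α β γ : Fin n → ℕ} (T : LRSkewTableau n α β γ) :
    Fin n → Fin n → ℕ :=
  fun i j => ((Finset.Ioc (α i) (γ i)).filter (fun c => T.entry i c = j.1 + 1)).card




/-- partial column sums -/
def psum {n : ℕ} (r : Fin n → Fin n → ℕ) (i : Fin n) (v : ℕ) : ℕ :=
  ∑ k ∈ Finset.univ.filter (fun k : Fin n => k.1 < v), r i k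

lemma psum_zero {n} (r : Fin n → Fin n → ℕ) (i) : psum r i 0 = 0 := by
  simp [psum]

lemma psum_mono {n} (r : Fin n → Fin n → ℕ) (i) {v v' : ℕ} (h : v ≤ v') :
    psum r i v ≤ psum r i v' := by
  apply Finset.sum_le_sum_of_subset
  intro k hk
  simp only [Finset.mem_filter] at *
  exact ⟨hk.1, lt_of_lt_of_le hk.2 h⟩

lemma psum_succ {n} (r : Fin n → Fin n → ℕ) (i) {v : ℕ} (h : v < n) :
    psum r i (v + 1) = psum r i v + r i ⟨v, h⟩ := by
  have : Finset.univ.filter (fun k : Fin n => k.1 < v + 1)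
      = insert ⟨v, h⟩ (Finset.univ.filter (fun k : Fin n => k.1 < v)) := by
    ext k
    simp only [Finset.mem_filter, Finset.mem_insert, Finset.mem_univ, true_and]
    constructor
    · intro hk
      rcases Nat.lt_succ_iff_lt_or_eq.1 hk with h' | h'
      · exact Or.inr h'
      · exact Or.inl (Fin.ext h')
    · rintro (rfl | hk)
      · exact Nat.lt_succ_self v
      · exact Nat.lt_succ_of_lt hk
  rw [psum, this, Finset.sum_insert (by simp), psum]
  ring

lemma psum_of_ge {n} (r : Fin n → Fin n → ℕ) (i) {v : ℕ} (h : n ≤ v) :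
    psum r i v = ∑ j, r i j := by
  rw [psum]
  congr 1
  ext k
  simp only [Finset.mem_filter, Finset.mem_univ, true_and, iff_true]
  exact lt_of_lt_of_le k.2 h

lemma psum_Iio {n} (r : Fin n → Fin n → ℕ) (i) (j : Fin n) :
    ∑ k ∈ Finset.Iio j, r i k = psum r i j.1 := by
  apply Finset.sum_congr _ (fun _ _ => rfl)
  ext k
  simp only [Finset.mem_Iio, Finset.mem_filter, Finset.mem_univ, true_and, Fin.lt_def]

lemma psum_Iic {n} (r : Fin n → Fin n → ℕ) (i) (j : Fin n) :
    ∑ k ∈ Finset.Iic j, r i k = psum r i (j.1 + 1) := by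
  apply Finset.sum_congr _ (fun _ _ => rfl)
  ext k
  simp only [Finset.mem_Iic, Finset.mem_filter, Finset.mem_univ, true_and, Fin.le_def,
    Nat.lt_succ_iff]

lemma count_map_range' (g : ℕ → ℕ) (u : ℕ) : ∀ (m a : ℕ),
    ((List.range' (a+1) m).map g).count u
      = ((Finset.Ioc a (a+m)).filter (fun c => g c = u)).card := by
  intro m
  induction m with
  | zero => simp
  | succ m ih =>
    intro a
    rw [List.range'_succ]
    have h1 : Finset.Ioc a (a + (m+1)) = insert (a+1) (Finset.Ioc (a+1) ((a+1)+m)) := by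
      ext c
      simp only [Finset.mem_Ioc, Finset.mem_insert]
      omega
    rw [h1, Finset.filter_insert]
    by_cases hg : g (a+1) = u
    · rw [if_pos hg, Finset.card_insert_of_notMem (by simp)]
      simp only [List.map_cons, List.count_cons, ih (a+1)]
      simp [hg]
    · rw [if_neg hg]
      simp only [List.map_cons, List.count_cons, ih (a+1)]
      simp [hg]




/-- the list `[m-1, ..., 1, 0]` of the lowest `m` row indices, top-to-bottom reversed -/
def tk (n m : ℕ) : List (Fin n) := ((List.finRange n).take m).reverse

lemma tk_eq_drop (n m : ℕ) : tk n m = ((List.finRange n).reverse).drop (n - m) := by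
  rw [tk, List.reverse_take, List.length_finRange]

lemma tk_n (n : ℕ) : tk n n = (List.finRange n).reverse := by
  rw [tk_eq_drop, Nat.sub_self, List.drop_zero]

lemma tk_succ {n m : ℕ} (h : m < n) : tk n (m + 1) = ⟨m, h⟩ :: tk n m := by
  have hlen : m < (List.finRange n).length := by simpa using h
  rw [tk, ← List.take_concat_get hlen, List.concat_eq_append, List.reverse_append]
  rw [tk]
  simp [List.getElem_finRange, Fin.cast]

lemma tk_suffix (n m : ℕ) : tk n m <:+ tk n n := by
  rw [tk_eq_drop, tk_n]
  exact List.drop_suffix _ _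

lemma tk_length {n m : ℕ} (h : m ≤ n) : (tk n m).length = m := by
  simp [tk, h]

lemma suffix_tk {n : ℕ} {l : List (Fin n)} (h : l <:+ tk n n) : l = tk n l.length := by
  have h2 := List.suffix_iff_eq_drop.1 h
  rw [tk_n] at h2
  simp only [List.length_reverse, List.length_finRange] at h2
  rw [tk_eq_drop]
  exact h2

lemma flatMap_tk_suffix {n m : ℕ} (f : Fin n → List ℕ) :
    (tk n m).flatMap f <:+ (tk n n).flatMap f := by
  obtain ⟨u, hu⟩ := tk_suffix n m
  exact ⟨u.flatMap f, by rw [← List.flatMap_append, hu]⟩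

lemma count_flatMap_tk {n : ℕ} (f : Fin n → List ℕ) (u : ℕ) :
    ∀ {m : ℕ}, m ≤ n →
    ((tk n m).flatMap f).count u
      = ∑ i ∈ Finset.univ.filter (fun i : Fin n => i.1 < m), (f i).count u := by
  intro m
  induction m with
  | zero =>
    intro _
    have : Finset.univ.filter (fun i : Fin n => i.1 < 0) = ∅ := by
      ext i; simp
    simp [tk, this]
  | succ m ih =>
    intro h
    have hm : m < n := h
    rw [tk_succ hm, List.flatMap_cons, List.count_append, ih (le_of_lt hm)]
    have : Finset.univ.filter (fun i : Fin n => i.1 < m + 1)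
        = insert ⟨m, hm⟩ (Finset.univ.filter (fun i : Fin n => i.1 < m)) := by
      ext k
      simp only [Finset.mem_filter, Finset.mem_insert, Finset.mem_univ, true_and]
      constructor
      · intro hk
        rcases Nat.lt_succ_iff_lt_or_eq.1 hk with h' | h'
        · exact Or.inr h'
        · exact Or.inl (Fin.ext h')
      · rintro (rfl | hk)
        · exact Nat.lt_succ_self m
        · exact Nat.lt_succ_of_lt hk
    rw [this, Finset.sum_insert (by simp)]

lemma suffix_append_cases {s a b : List ℕ} (h : s <:+ a ++ b) :
    s <:+ b ∨ ∃ t, t <:+ a ∧ s = t ++ b := by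
  obtain ⟨u, hu⟩ := h
  rcases List.append_eq_append_iff.1 hu with ⟨a', h1, h2⟩ | ⟨c', h1, h2⟩
  · exact Or.inr ⟨a', ⟨u, h1.symm⟩, h2⟩
  · exact Or.inl ⟨c', h2.symm⟩

lemma suffix_flatMap_decomp {n : ℕ} {f : Fin n → List ℕ} :
    ∀ {l : List (Fin n)} {s : List ℕ}, s <:+ l.flatMap f →
    s = [] ∨ ∃ (x : Fin n) (l₂ : List (Fin n)) (t : List ℕ),
      (x :: l₂) <:+ l ∧ t <:+ f x ∧ s = t ++ l₂.flatMap f := by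
  intro l
  induction l with
  | nil => intro s h; left; simpa using List.eq_nil_of_suffix_nil (by simpa using h)
  | cons x l' ih =>
    intro s h
    rw [List.flatMap_cons] at h
    rcases suffix_append_cases h with h' | ⟨t, ht, rfl⟩
    · rcases ih h' with h'' | ⟨x', l₂, t, h1, h2, h3⟩
      · exact Or.inl h''
      · exact Or.inr ⟨x', l₂, t, h1.trans (List.suffix_cons x l'), h2, h3⟩
    · exact Or.inr ⟨x, l', t, List.suffix_refl _, ht, rfl⟩


namespace LRAux

/-- the word of row `i+1` of an entry function, read left to right -/
def rowWord {n : ℕ} (α γ : Fin n → ℕ) (e : Fin n → ℕ → ℕ) (i : Fin n) : List ℕ :=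
  (List.range' (α i + 1) (γ i - α i)).map (e i)

section Tableau

variable {n : ℕ} {α β γ : Fin n → ℕ} (T : LRSkewTableau n α β γ)

/-- number of cells in row `i+1` with entry at most `v` -/
def Nle (i : Fin n) (v : ℕ) : ℕ :=
  ((Finset.Ioc (α i) (γ i)).filter (fun c => T.entry i c ≤ v)).card

lemma prefix_iff (i : Fin n) {c : ℕ} (hc1 : α i < c) (hc2 : c ≤ γ i) (v : ℕ) :
    T.entry i c ≤ v ↔ c ≤ α i + Nle T i v := by
  constructor
  · intro h
    have hsub : Finset.Ioc (α i) c
        ⊆ (Finset.Ioc (α i) (γ i)).filter (fun c' => T.entry i c' ≤ v) := by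
      intro c' hc'
      simp only [Finset.mem_Ioc, Finset.mem_filter] at *
      exact ⟨⟨hc'.1, le_trans hc'.2 hc2⟩, le_trans (T.row_weak i c' c hc'.1 hc'.2 hc2) h⟩
    have hcard := Finset.card_le_card hsub
    rw [Nat.card_Ioc] at hcard
    unfold Nle
    omega
  · intro h
    by_contra hlt
    push_neg at hlt
    have hsub : (Finset.Ioc (α i) (γ i)).filter (fun c' => T.entry i c' ≤ v)
        ⊆ Finset.Ioc (α i) (c - 1) := by
      intro c' hc'
      simp only [Finset.mem_Ioc, Finset.mem_filter] at *
      refine ⟨hc'.1.1, ?_⟩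
      by_contra hge
      push_neg at hge
      have := T.row_weak i c c' hc1 (by omega) hc'.1.2
      omega
    have hcard := Finset.card_le_card hsub
    rw [Nat.card_Ioc] at hcard
    unfold Nle at h
    omega

lemma Nle_eq_psum (i : Fin n) (v : ℕ) : Nle T i v = psum (tabToR T) i v := by
  unfold Nle psum tabToR
  rw [Finset.card_filter]
  have : ∀ k ∈ Finset.univ.filter (fun k : Fin n => k.1 < v),
      ((Finset.Ioc (α i) (γ i)).filter (fun c => T.entry i c = k.1 + 1)).card
      = ∑ c ∈ Finset.Ioc (α i) (γ i), if T.entry i c = k.1 + 1 then 1 else 0 := by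
    intro k _
    rw [Finset.card_filter]
  rw [Finset.sum_congr rfl this, Finset.sum_comm]
  apply Finset.sum_congr rfl
  intro c hc
  simp only [Finset.mem_Ioc] at hc
  have he1 : 1 ≤ T.entry i c := T.entry_pos i c hc.1 hc.2
  have he2 : T.entry i c ≤ n := T.entry_le i c hc.1 hc.2
  by_cases hv : T.entry i c ≤ v
  · rw [if_pos hv]
    have hk : (⟨T.entry i c - 1, by omega⟩ : Fin n)
        ∈ Finset.univ.filter (fun k : Fin n => k.1 < v) := by
      simp only [Finset.mem_filter, Finset.mem_univ, true_and]
      omega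
    rw [Finset.sum_eq_single_of_mem ⟨T.entry i c - 1, by omega⟩ hk]
    · rw [if_pos (show T.entry i c = T.entry i c - 1 + 1 by omega)]
    · intro k _ hk'
      refine if_neg fun hcon => hk' (Fin.ext ?_)
      show k.1 = T.entry i c - 1
      omega
  · rw [if_neg hv]
    symm
    apply Finset.sum_eq_zero
    intro k hk
    simp only [Finset.mem_filter, Finset.mem_univ, true_and] at hk
    exact if_neg (by omega)

lemma Nle_top (i : Fin n) : Nle T i n = γ i - α i := by
  unfold Nle
  rw [Finset.filter_true_of_mem, Nat.card_Ioc]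
  intro c hc
  simp only [Finset.mem_Ioc] at hc
  exact T.entry_le i c hc.1 hc.2

lemma sum_tabToR_row (i : Fin n) : ∑ j, tabToR T i j = γ i - α i := by
  rw [← psum_of_ge (tabToR T) i (le_refl n), ← Nle_eq_psum, Nle_top]

lemma rowWord_count (i : Fin n) (u : ℕ) :
    (rowWord α γ T.entry i).count u
      = ((Finset.Ioc (α i) (γ i)).filter (fun c => T.entry i c = u)).card := by
  have h : α i + (γ i - α i) = γ i := by have := T.sub i; omega
  rw [rowWord, count_map_range', h]

lemma rowWord_count_eq_tabR (i : Fin n) {u : ℕ} (h1 : 1 ≤ u) (h2 : u ≤ n) :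
    (rowWord α γ T.entry i).count u = tabToR T i ⟨u - 1, by omega⟩ := by
  rw [rowWord_count]
  unfold tabToR
  congr 1
  ext c
  simp only [Finset.mem_filter]
  constructor
  · rintro ⟨hc, he⟩; exact ⟨hc, by omega⟩
  · rintro ⟨hc, he⟩; exact ⟨hc, by omega⟩

end Tableau

end LRAux
namespace LRAux

section Tableau2

variable {n : ℕ} {α β γ : Fin n → ℕ} (T : LRSkewTableau n α β γ)

lemma filter_lt_eq_Iio (i : Fin n) :
    Finset.univ.filter (fun i' : Fin n => i'.1 < i.1) = Finset.Iio i := by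
  ext k
  simp only [Finset.mem_filter, Finset.mem_univ, true_and, Finset.mem_Iio, Fin.lt_def]

lemma Iic_eq_insert_Iio (i : Fin n) : Finset.Iic i = insert i (Finset.Iio i) := by
  ext k
  simp only [Finset.mem_Iic, Finset.mem_insert, Finset.mem_Iio]
  rw [le_iff_lt_or_eq]
  tauto

/-- the word of the tableau -/
lemma word_eq : (((List.finRange n).reverse).flatMap fun i =>
      (List.range' (α i + 1) (γ i - α i)).map (T.entry i))
    = (tk n n).flatMap (rowWord α γ T.entry) := by
  rw [tk_n]; rfl

lemma tab_v2 (i j : Fin n) (hj : 0 < j.1) :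
    ∑ i' ∈ Finset.Iic i, tabToR T i' j
      ≤ ∑ i' ∈ Finset.Iio i, tabToR T i' ⟨j.1 - 1, by omega⟩ := by
  set v := j.1 with hv
  set P := α i + Nle T i v with hP
  have hPα : α i ≤ P := Nat.le_add_right _ _
  have hPγ : P ≤ γ i := by
    have h1 : Nle T i v ≤ γ i - α i := by
      have := Finset.card_filter_le (Finset.Ioc (α i) (γ i)) (fun c => T.entry i c ≤ v)
      rwa [Nat.card_Ioc] at this
    have := T.sub i
    omega
  -- the suffix of row i consisting of entries > v
  set t : List ℕ := (List.range' (P + 1) (γ i - P)).map (T.entry i) with ht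
  have hrow : rowWord α γ T.entry i
      = ((List.range' (α i + 1) (P - α i)).map (T.entry i)) ++ t := by
    rw [rowWord, ← List.map_append]
    congr 1
    have := List.range'_append (s := α i + 1) (m := P - α i) (n := γ i - P) (step := 1)
    simp only [one_mul] at this
    rw [show α i + 1 + (P - α i) = P + 1 by omega] at this
    rw [this]
    congr 1
    omega
  have htsuf : t <:+ rowWord α γ T.entry i := ⟨_, hrow.symm⟩
  set s : List ℕ := t ++ (tk n i.1).flatMap (rowWord α γ T.entry) with hs
  have hssuf : s <:+ (tk n n).flatMap (rowWord α γ T.entry) := by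
    have h1 : (tk n (i.1 + 1)).flatMap (rowWord α γ T.entry)
        <:+ (tk n n).flatMap (rowWord α γ T.entry) := flatMap_tk_suffix _
    rw [tk_succ i.2, List.flatMap_cons] at h1
    refine List.IsSuffix.trans ?_ h1
    obtain ⟨u, hu⟩ := htsuf
    exact ⟨u, by rw [hs, ← List.append_assoc, hu]⟩
  have hlat := T.lattice s (by rw [word_eq]; exact hssuf) v hj
  -- counts
  have hcount : ∀ u : ℕ, s.count u
      = t.count u + ∑ i' ∈ Finset.Iio i, (rowWord α γ T.entry i').count u := by
    intro u
    rw [hs, List.count_append, count_flatMap_tk _ _ (le_of_lt i.2), filter_lt_eq_Iio]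
  -- count of v+1 in t
  have htc1 : t.count (v + 1) = tabToR T i j := by
    have h1 : α i + 1 ≤ P + 1 := by omega
    have h2 : P + (γ i - P) = γ i := by omega
    rw [ht, count_map_range', h2]
    have h3 : (Finset.Ioc P (γ i)).filter (fun c => T.entry i c = v + 1)
        = (Finset.Ioc (α i) (γ i)).filter (fun c => T.entry i c = v + 1) := by
      ext c
      simp only [Finset.mem_filter, Finset.mem_Ioc]
      constructor
      · rintro ⟨⟨u1, u2⟩, u3⟩; exact ⟨⟨by omega, u2⟩, u3⟩
      · rintro ⟨⟨u1, u2⟩, u3⟩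
        refine ⟨⟨?_, u2⟩, u3⟩
        by_contra hle
        push_neg at hle
        have := (prefix_iff T i u1 u2 v).2 hle
        omega
    rw [h3]
    rfl
  -- count of v in t is 0
  have htc0 : t.count v = 0 := by
    have h2 : P + (γ i - P) = γ i := by omega
    rw [ht, count_map_range', h2, Finset.card_eq_zero, Finset.filter_eq_empty_iff]
    intro c hc
    simp only [Finset.mem_Ioc] at hc
    intro hcon
    have h4 : T.entry i c ≤ v := le_of_eq hcon
    have := (prefix_iff T i (by omega) hc.2 v).1 h4
    omega
  have hvn : v < n := j.2
  have hrc1 : ∀ i' : Fin n, (rowWord α γ T.entry i').count (v + 1) = tabToR T i' j := by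
    intro i'
    rw [rowWord_count_eq_tabR T i' (by omega) (by omega)]
    congr 1
  have hrc0 : ∀ i' : Fin n, (rowWord α γ T.entry i').count v
      = tabToR T i' ⟨j.1 - 1, by omega⟩ := by
    intro i'
    rw [rowWord_count_eq_tabR T i' (by omega) (by omega)]
  rw [hcount (v+1), hcount v, htc1, htc0,
    Finset.sum_congr rfl (fun i' _ => hrc1 i'),
    Finset.sum_congr rfl (fun i' _ => hrc0 i')] at hlat
  rw [Iic_eq_insert_Iio, Finset.sum_insert (by simp)]
  omega

lemma natV1 {r : Fin n → Fin n → ℕ}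
    (h : ∀ i j : Fin n, 0 < j.1 →
      ∑ i' ∈ Finset.Iic i, r i' j
        ≤ ∑ i' ∈ Finset.Iio i, r i' ⟨j.1 - 1, by omega⟩) :
    ∀ i j : Fin n, i < j → r i j = 0 := by
  have key : ∀ m (i j : Fin n), i.1 ≤ m → i < j → ∑ i' ∈ Finset.Iic i, r i' j = 0 := by
    intro m
    induction m with
    | zero =>
      intro i j hi hij
      have hij' := hij
      rw [Fin.lt_def] at hij'
      have hj : 0 < j.1 := by omega
      have h1 := h i j hj
      have h2 : Finset.Iio i = ∅ := by
        ext k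
        simp only [Finset.mem_Iio, Finset.notMem_empty, iff_false, Fin.lt_def]
        omega
      rw [h2, Finset.sum_empty] at h1
      omega
    | succ m ih =>
      intro i j hi hij
      have hij' := hij
      rw [Fin.lt_def] at hij'
      have hj : 0 < j.1 := by omega
      have h1 := h i j hj
      rcases Nat.eq_zero_or_pos i.1 with hi0 | hi0
      · have h2 : Finset.Iio i = ∅ := by
          ext k
          simp only [Finset.mem_Iio, Finset.notMem_empty, iff_false, Fin.lt_def]
          omega
        rw [h2, Finset.sum_empty] at h1
        omega
      · set i' : Fin n := ⟨i.1 - 1, by omega⟩ with hi'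
        have h2 : Finset.Iio i = Finset.Iic i' := by
          ext k
          simp only [Finset.mem_Iio, Finset.mem_Iic, Fin.lt_def, Fin.le_def, hi', Fin.val_mk]
          omega
        have h3 : i' < (⟨j.1 - 1, by omega⟩ : Fin n) := by
          rw [Fin.lt_def]
          show i.1 - 1 < j.1 - 1
          omega
        have h4 := ih i' ⟨j.1 - 1, by omega⟩ (by show i.1 - 1 ≤ m; omega) h3
        rw [h2] at h1
        exact Nat.le_zero.1 (h1.trans (le_of_eq h4))
  intro i j hij
  have h1 := key i.1 i j (le_refl _) hij
  have h2 : r i j ≤ ∑ i' ∈ Finset.Iic i, r i' j :=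
    Finset.single_le_sum (f := fun i' => r i' j) (fun _ _ => Nat.zero_le _)
      (Finset.mem_Iic.2 (le_refl i))
  omega

lemma tab_iv (hα : IsPartition n α) (hγ : IsPartition n γ)
    (i : Fin n) (h : i.1 + 1 < n) (j : Fin n) :
    α ⟨i.1 + 1, h⟩ + psum (tabToR T) ⟨i.1 + 1, h⟩ (j.1 + 1)
      ≤ α i + psum (tabToR T) i j.1 := by
  set i1 : Fin n := ⟨i.1 + 1, h⟩ with hi1
  rw [← Nle_eq_psum, ← Nle_eq_psum]
  have hle : i ≤ i1 := by rw [Fin.le_def]; simp only [hi1]; omega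
  rcases Nat.eq_zero_or_pos (Nle T i1 (j.1 + 1)) with hm | hm
  · rw [hm]
    have := hα i i1 hle
    omega
  · set c := α i1 + Nle T i1 (j.1 + 1) with hc
    have hcm : Nle T i1 (j.1 + 1) ≤ γ i1 - α i1 := by
      have h1 := Finset.card_filter_le (Finset.Ioc (α i1) (γ i1))
        (fun c => T.entry i1 c ≤ j.1 + 1)
      rw [Nat.card_Ioc] at h1
      exact h1
    have hsub := T.sub i1
    have hc1 : α i1 < c := by omega
    have hc2 : c ≤ γ i1 := by omega
    have hce : T.entry i1 c ≤ j.1 + 1 := (prefix_iff T i1 hc1 hc2 _).2 (le_of_eq hc)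
    by_cases hcα : c ≤ α i
    · omega
    · push_neg at hcα
      have hc2' : c ≤ γ i := le_trans hc2 (hγ i i1 hle)
      have hcs : T.entry i c < T.entry i1 c := T.col_strict i h c hc1 hc2 hcα hc2'
      have h5 : T.entry i c ≤ j.1 := by omega
      have := (prefix_iff T i hcα hc2' j.1).1 h5
      omega

/-- forward direction : `tabToR T` is a nonnegative integer solution -/
lemma tab_forward (hα : IsPartition n α) (hγ : IsPartition n γ) :
    IsNatLRSolution n α β γ (tabToR T) := by
  refine ⟨fun i j => Nat.cast_nonneg _, ?_, ?_, ?_, ?_, ?_⟩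
  · intro i
    have h1 : α i + ∑ j, tabToR T i j = γ i := by
      rw [sum_tabToR_row]
      have := T.sub i
      omega
    beta_reduce
    exact_mod_cast h1
  · intro j
    beta_reduce
    exact_mod_cast T.content j
  · intro i h j
    have h1 := tab_iv T hα hγ i h j
    rw [← psum_Iic (tabToR T) _ j, ← psum_Iio (tabToR T) i j] at h1
    beta_reduce
    exact_mod_cast h1
  · intro i j hij
    have h1 := natV1 (fun i j hj => tab_v2 T i j hj) i j hij
    show ((tabToR T i j : ℕ) : ℚ) = 0
    exact_mod_cast h1
  · intro i j hj
    beta_reduce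
    exact_mod_cast tab_v2 T i j hj

end Tableau2

end LRAux
namespace LRAux

section Inj

variable {n : ℕ} {α β γ : Fin n → ℕ}

lemma tab_ext {T1 T2 : LRSkewTableau n α β γ} (h : T1.entry = T2.entry) : T1 = T2 := by
  cases T1
  cases T2
  simp only at h
  subst h
  rfl

lemma tab_inj {T1 T2 : LRSkewTableau n α β γ} (h : tabToR T1 = tabToR T2) : T1 = T2 := by
  apply tab_ext
  funext i c
  by_cases hc : α i < c ∧ c ≤ γ i
  · have hN : ∀ v, Nle T1 i v = Nle T2 i v := by
      intro v
      rw [Nle_eq_psum, Nle_eq_psum, h]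
    apply le_antisymm
    · rw [prefix_iff T1 i hc.1 hc.2, hN]
      exact (prefix_iff T2 i hc.1 hc.2 _).1 (le_refl _)
    · rw [prefix_iff T2 i hc.1 hc.2, ← hN]
      exact (prefix_iff T1 i hc.1 hc.2 _).1 (le_refl _)
  · push_neg at hc
    have hor : c ≤ α i ∨ γ i < c := by
      by_cases h1 : α i < c
      · exact Or.inr (hc h1)
      · push_neg at h1; exact Or.inl h1
    rw [T1.zero_outside i c hor, T2.zero_outside i c hor]

end Inj

end LRAux
namespace LRAux

section Sol

variable {n : ℕ} {α β γ : Fin n → ℕ} {r : Fin n → Fin n → ℕ}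

/-- the entry function built from a solution `r` -/
def solE (α γ : Fin n → ℕ) (r : Fin n → Fin n → ℕ) : Fin n → ℕ → ℕ := fun i c =>
  if α i < c ∧ c ≤ γ i then ((Finset.range n).filter (fun v => α i + psum r i v < c)).card
  else 0

lemma solE_le_iff (hsum : ∀ i, α i + psum r i n = γ i) (i : Fin n) {c : ℕ}
    (hc1 : α i < c) (hc2 : c ≤ γ i) (v : ℕ) :
    solE α γ r i c ≤ v ↔ c ≤ α i + psum r i v := by
  rw [solE, if_pos ⟨hc1, hc2⟩]
  constructor
  · intro hE
    by_contra hlt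
    push_neg at hlt
    rcases le_or_gt n v with hv | hv
    · have hpe : psum r i v = psum r i n := by
        rw [psum_of_ge _ _ hv, psum_of_ge _ _ (le_refl n)]
      have := hsum i
      omega
    · have hsubs : Finset.range (v + 1)
          ⊆ (Finset.range n).filter (fun u => α i + psum r i u < c) := by
        intro u hu
        simp only [Finset.mem_range, Finset.mem_filter] at *
        refine ⟨by omega, ?_⟩
        have : psum r i u ≤ psum r i v := psum_mono r i (by omega)
        omega
      have := Finset.card_le_card hsubs
      rw [Finset.card_range] at this
      omega
  · intro hcle
    have hsubs : (Finset.range n).filter (fun u => α i + psum r i u < c)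
        ⊆ Finset.range v := by
      intro u hu
      simp only [Finset.mem_range, Finset.mem_filter] at *
      by_contra hge
      push_neg at hge
      have : psum r i v ≤ psum r i u := psum_mono r i hge
      omega
    have := Finset.card_le_card hsubs
    rwa [Finset.card_range] at this

lemma solE_pos (hn : 0 < n) (i : Fin n) {c : ℕ} (hc1 : α i < c) (hc2 : c ≤ γ i) :
    1 ≤ solE α γ r i c := by
  rw [solE, if_pos ⟨hc1, hc2⟩, Nat.one_le_iff_ne_zero, ← Nat.pos_iff_ne_zero]
  apply Finset.card_pos.2
  refine ⟨0, ?_⟩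
  simp only [Finset.mem_filter, Finset.mem_range]
  rw [psum_zero]
  exact ⟨hn, by omega⟩

lemma solE_le_n (i : Fin n) (c : ℕ) : solE α γ r i c ≤ n := by
  rw [solE]
  split
  · calc ((Finset.range n).filter _).card ≤ (Finset.range n).card :=
        Finset.card_filter_le _ _
      _ = n := Finset.card_range n
  · exact Nat.zero_le n

lemma solE_filter_eq (hsum : ∀ i, α i + psum r i n = γ i) (i : Fin n) (j : Fin n) :
    (Finset.Ioc (α i) (γ i)).filter (fun c => solE α γ r i c = j.1 + 1)
      = Finset.Ioc (α i + psum r i j.1) (α i + psum r i (j.1 + 1)) := by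
  ext c
  simp only [Finset.mem_filter, Finset.mem_Ioc]
  constructor
  · rintro ⟨⟨hc1, hc2⟩, hE⟩
    have hle := (solE_le_iff hsum i hc1 hc2 (j.1 + 1)).1 (le_of_eq hE)
    have hgt : ¬ (solE α γ r i c ≤ j.1) := by omega
    rw [solE_le_iff hsum i hc1 hc2 j.1] at hgt
    exact ⟨by omega, hle⟩
  · rintro ⟨hlo, hhi⟩
    have hc1 : α i < c := by omega
    have hc2 : c ≤ γ i := by
      have hmono : psum r i (j.1 + 1) ≤ psum r i n := psum_mono r i j.2
      have := hsum i
      omega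
    refine ⟨⟨hc1, hc2⟩, ?_⟩
    have hle : solE α γ r i c ≤ j.1 + 1 := (solE_le_iff hsum i hc1 hc2 _).2 hhi
    have hgt : ¬ (solE α γ r i c ≤ j.1) := by
      rw [solE_le_iff hsum i hc1 hc2 j.1]
      omega
    omega

lemma solE_card (hsum : ∀ i, α i + psum r i n = γ i) (i : Fin n) (j : Fin n) :
    ((Finset.Ioc (α i) (γ i)).filter (fun c => solE α γ r i c = j.1 + 1)).card = r i j := by
  rw [solE_filter_eq hsum i j, Nat.card_Ioc, psum_succ r i j.2]
  have : (⟨j.1, j.2⟩ : Fin n) = j := rfl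
  rw [this]
  omega

lemma rowWord_count_solE (hsum : ∀ i, α i + psum r i n = γ i)
    (hsub : ∀ i, α i ≤ γ i) (i : Fin n) {u : ℕ} (hu1 : 1 ≤ u) (hu2 : u ≤ n) :
    (rowWord α γ (solE α γ r) i).count u = r i ⟨u - 1, by omega⟩ := by
  have h : α i + (γ i - α i) = γ i := by have := hsub i; omega
  rw [rowWord, count_map_range', h]
  have h3 : ((Finset.Ioc (α i) (γ i)).filter (fun c => solE α γ r i c = u - 1 + 1)).card
      = r i ⟨u - 1, by omega⟩ := solE_card hsum i ⟨u - 1, by omega⟩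
  conv_lhs => rw [show u = u - 1 + 1 by omega]
  exact h3

lemma rowWord_count_solE_zero (hn : 0 < n) (i : Fin n) {u : ℕ} (hu : n < u ∨ u = 0) :
    (rowWord α γ (solE α γ r) i).count u = 0 := by
  rw [rowWord, List.count_eq_zero]
  intro hmem
  rw [List.mem_map] at hmem
  obtain ⟨c, hc, hcu⟩ := hmem
  rw [List.mem_range'_1] at hc
  have hc1 : α i < c := by omega
  have hc2 : c ≤ γ i := by omega
  have hp := solE_pos (r := r) hn i hc1 hc2
  have hl := solE_le_n (r := r) (α := α) (γ := γ) i c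
  omega

end Sol

end LRAux
namespace LRAux

section Surj

variable {n : ℕ} {α β γ : Fin n → ℕ} {r : Fin n → Fin n → ℕ}

lemma sol_shape (hr : IsNatLRSolution n α β γ r) : ∀ i, α i + ∑ j, r i j = γ i := by
  intro i
  have := hr.2.1 i
  beta_reduce at this
  exact_mod_cast this

lemma sol_content (hr : IsNatLRSolution n α β γ r) : ∀ j, ∑ i, r i j = β j := by
  intro j
  have := hr.2.2.1 j
  beta_reduce at this
  exact_mod_cast this

lemma sol_iv (hr : IsNatLRSolution n α β γ r) :
    ∀ (i : Fin n) (h : i.1 + 1 < n) (j : Fin n),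
      α ⟨i.1 + 1, h⟩ + psum r ⟨i.1 + 1, h⟩ (j.1 + 1) ≤ α i + psum r i j.1 := by
  intro i h j
  have hq := hr.2.2.2.1 i h j
  have e1 : ∑ k ∈ Finset.Iic j, ((r ⟨i.1 + 1, h⟩ k : ℕ) : ℚ)
      = ((psum r ⟨i.1 + 1, h⟩ (j.1 + 1) : ℕ) : ℚ) := by
    rw [← psum_Iic]
    exact (Nat.cast_sum _ _).symm
  have e2 : ∑ k ∈ Finset.Iio j, ((r i k : ℕ) : ℚ) = ((psum r i j.1 : ℕ) : ℚ) := by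
    rw [← psum_Iio]
    exact (Nat.cast_sum _ _).symm
  rw [e1, e2] at hq
  exact_mod_cast hq

lemma sol_v2 (hr : IsNatLRSolution n α β γ r) :
    ∀ i j : Fin n, 0 < j.1 →
      ∑ i' ∈ Finset.Iic i, r i' j
        ≤ ∑ i' ∈ Finset.Iio i, r i' ⟨j.1 - 1, by omega⟩ := by
  intro i j hj
  have hq := hr.2.2.2.2.2 i j hj
  have e1 : ∑ i' ∈ Finset.Iic i, ((r i' j : ℕ) : ℚ)
      = ((∑ i' ∈ Finset.Iic i, r i' j : ℕ) : ℚ) := (Nat.cast_sum _ _).symm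
  have e2 : ∑ i' ∈ Finset.Iio i, ((r i' ⟨j.1 - 1, by omega⟩ : ℕ) : ℚ)
      = ((∑ i' ∈ Finset.Iio i, r i' ⟨j.1 - 1, by omega⟩ : ℕ) : ℚ) := (Nat.cast_sum _ _).symm
  rw [e1, e2] at hq
  exact_mod_cast hq

lemma sol_surj (hn : 0 < n) (hr : IsNatLRSolution n α β γ r) :
    ∃ T : LRSkewTableau n α β γ, tabToR T = r := by
  have h2 := sol_shape hr
  have h3 := sol_content hr
  have h4 := sol_iv hr
  have h6 := sol_v2 hr
  have hsum : ∀ i, α i + psum r i n = γ i := by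
    intro i
    rw [psum_of_ge r i (le_refl n)]
    exact h2 i
  have hsub : ∀ i, α i ≤ γ i := by
    intro i
    have := h2 i
    omega
  refine ⟨⟨hsub, solE α γ r, ?_, ?_, ?_, ?_, ?_, ?_, ?_⟩, ?_⟩
  · -- entry_pos
    intro i c hc1 hc2
    exact solE_pos hn i hc1 hc2
  · -- entry_le
    intro i c _ _
    exact solE_le_n i c
  · -- zero_outside
    intro i c hor
    rw [solE, if_neg (by omega)]
  · -- row_weak
    intro i c c' hc1 hcc' hc2
    have hcell' : α i < c' := by omega
    have hcell : c ≤ γ i := by omega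
    rw [solE_le_iff hsum i hc1 hcell]
    have := (solE_le_iff hsum i hcell' hc2 (solE α γ r i c')).1 (le_refl _)
    omega
  · -- col_strict
    intro i h c hc1 hc2 hc1' hc2'
    set i1 : Fin n := ⟨i.1 + 1, h⟩ with hi1
    set v := solE α γ r i1 c with hv
    have hv1 : 1 ≤ v := solE_pos hn i1 hc1 hc2
    have hvn : v ≤ n := solE_le_n i1 c
    have hcle : c ≤ α i1 + psum r i1 v := (solE_le_iff hsum i1 hc1 hc2 v).1 (le_refl _)
    have hiv := h4 i h ⟨v - 1, by omega⟩
    have hps : psum r i1 ((v - 1) + 1) = psum r i1 v := by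
      congr 1
      omega
    rw [hps] at hiv
    have hle : solE α γ r i c ≤ v - 1 := by
      rw [solE_le_iff hsum i hc1' hc2']
      calc c ≤ α i1 + psum r i1 v := hcle
        _ ≤ α i + psum r i (v - 1) := by
            have : (⟨v - 1, by omega⟩ : Fin n).1 = v - 1 := rfl
            rw [this] at hiv
            exact hiv
    omega
  · -- content
    intro j
    calc ∑ i, ((Finset.Ioc (α i) (γ i)).filter (fun c => solE α γ r i c = j.1 + 1)).card
        = ∑ i, r i j := Finset.sum_congr rfl (fun i _ => solE_card hsum i j)
      _ = β j := h3 j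
  · -- lattice
    intro s hs u hu
    have hs' : s <:+ (tk n n).flatMap (rowWord α γ (solE α γ r)) := by
      rw [tk_n]
      exact hs
    rcases suffix_flatMap_decomp hs' with rfl | ⟨x, l₂, t, hxl, ht, rfl⟩
    · simp
    · have hlen1 : (x :: l₂).length ≤ n := by
        have := hxl.length_le
        rwa [tk_length (le_refl n)] at this
      have hm : l₂.length < n := by
        simp only [List.length_cons] at hlen1
        omega
      have hxl2 := suffix_tk hxl
      rw [List.length_cons, tk_succ hm] at hxl2
      obtain ⟨hx, hl₂⟩ : x = ⟨l₂.length, hm⟩ ∧ l₂ = tk n l₂.length := by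
        constructor
        · exact (List.cons.injEq _ _ _ _ ▸ hxl2).1
        · exact (List.cons.injEq _ _ _ _ ▸ hxl2).2
      set m := l₂.length with hmdef
      have hcount : ∀ u' : ℕ,
          (t ++ l₂.flatMap (rowWord α γ (solE α γ r))).count u'
            = t.count u' + ∑ i' ∈ Finset.Iio x, (rowWord α γ (solE α γ r) i').count u' := by
        intro u'
        rw [List.count_append, hl₂, count_flatMap_tk _ _ (le_of_lt hm)]
        congr 1
        apply Finset.sum_congr _ (fun _ _ => rfl)
        ext k
        rw [Finset.mem_filter, Finset.mem_Iio, hx]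
        simp only [Finset.mem_univ, true_and, Fin.lt_def]
        exact Iff.rfl
      have htle : ∀ u' : ℕ, t.count u' ≤ (rowWord α γ (solE α γ r) x).count u' :=
        fun u' => ht.sublist.count_le u'
      rcases le_or_gt n u with hun | hun
      · -- u ≥ n : no entries equal to u+1 anywhere
        have hz : ∀ i' : Fin n, (rowWord α γ (solE α γ r) i').count (u + 1) = 0 :=
          fun i' => rowWord_count_solE_zero hn i' (Or.inl (by omega))
        rw [hcount (u + 1), hcount u]
        have ht0 : t.count (u + 1) = 0 := le_antisymm ((htle (u + 1)).trans (le_of_eq (hz x))) (Nat.zero_le _)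
        rw [ht0]
        have hsz : ∑ i' ∈ Finset.Iio x, (rowWord α γ (solE α γ r) i').count (u + 1) = 0 :=
          Finset.sum_eq_zero (fun i' _ => hz i')
        rw [hsz]
        omega
      · -- 1 ≤ u < n
        set j : Fin n := ⟨u, hun⟩ with hj
        have hr1 : ∀ i' : Fin n, (rowWord α γ (solE α γ r) i').count (u + 1) = r i' j := by
          intro i'
          rw [rowWord_count_solE hsum hsub i' (by omega) (by omega)]
          congr 1
        have hr0 : ∀ i' : Fin n, (rowWord α γ (solE α γ r) i').count u
            = r i' ⟨u - 1, by omega⟩ := by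
          intro i'
          rw [rowWord_count_solE hsum hsub i' (by omega) (by omega)]
        have hkey := h6 x j (by show 0 < u; omega)
        rw [Iic_eq_insert_Iio, Finset.sum_insert (by simp)] at hkey
        rw [hcount (u + 1), hcount u]
        rw [Finset.sum_congr rfl (fun i' _ => hr1 i'),
          Finset.sum_congr rfl (fun i' _ => hr0 i')]
        have h10 := htle (u + 1)
        rw [hr1 x] at h10
        have hjval : j.1 = u := rfl
        have hfin : (⟨j.1 - 1, by omega⟩ : Fin n) = ⟨u - 1, by omega⟩ := by
          apply Fin.ext
          show j.1 - 1 = u - 1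
          rw [hjval]
        rw [hfin] at hkey
        omega
  · -- tabToR of the constructed tableau is r
    funext i j
    exact solE_card hsum i j

end Surj

end LRAux
/-- The map `T ↦ r`, where `r i j` is the number of entries equal
to `j+1` in row `i+1` of `T`, is a bijection from the set of Littlewood–Richardson
skew tableaux of shape `γ/α` and content `β` (entries in `{1,…,n}`) onto the set of
nonnegative integer solutions of the LR system for `(α,β,γ)`.  In particular the
Littlewood–Richardson coefficient, the number of such tableaux, equals the number
of nonnegative integer solutions of the LR system. -/
theorem lr_tableaux_biject_with_integer_solutions
    (n : ℕ) (hn : 0 < n) (α β γ : Fin n → ℕ)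
    (hα : IsPartition n α) (hβ : IsPartition n β) (hγ : IsPartition n γ) :
    Set.BijOn (tabToR (n := n) (α := α) (β := β) (γ := γ)) Set.univ
      {r : Fin n → Fin n → ℕ | IsNatLRSolution n α β γ r} ∧
    Nat.card (LRSkewTableau n α β γ)
      = Set.ncard {r : Fin n → Fin n → ℕ | IsNatLRSolution n α β γ r} := by
  have hbij : Set.BijOn (tabToR (n := n) (α := α) (β := β) (γ := γ)) Set.univ
      {r : Fin n → Fin n → ℕ | IsNatLRSolution n α β γ r} := by
    refine ⟨?_, ?_, ?_⟩
    · intro T _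
      show IsNatLRSolution n α β γ (tabToR T)
      exact LRAux.tab_forward T hα hγ
    · intro T1 _ T2 _ h
      exact LRAux.tab_inj h
    · intro r hr
      obtain ⟨T, hT⟩ := LRAux.sol_surj hn hr
      exact ⟨T, Set.mem_univ T, hT⟩
  refine ⟨hbij, ?_⟩
  rw [← Set.ncard_univ, ← hbij.image_eq]
  exact (Set.ncard_image_of_injOn hbij.injOn).symm
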